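/- arXiv:math/0601156 — 2 statements merged into one kernel-verified Lean document; each statement's English description precedes it below -/
import Mathlib

section
/- If R: 𝔤 → 𝔤 is a linear map on a Lie algebra 𝔤 satisfying the modified Yang-Baxter equation [R(A),R(B)] − R([R(A),B] + [A,R(B)]) = −[A,B], then [A,B]_R := ½([R(A),B] + [A,R(B)]) defines a Lie bracket on 𝔤 (it is bilinear, antisymmetric, and satisfies the Jacobi identity). -/
noncomputable section

/-- The R-bracket `[A,B]_R = ½([R(A),B] + [A,R(B)])`. -/
def rBr {L : Type*} [LieRing L] [LieAlgebra ℝ L] (R : L →ₗ[ℝ] L) (A B : L) : L :=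
  (2 : ℝ)⁻¹ • (⁅R A, B⁆ + ⁅A, R B⁆)

/-- if `R` satisfies the modified Yang-Baxter equation, then the R-bracket
is a Lie bracket: bilinear, antisymmetric, and satisfying the Jacobi identity. -/
theorem mYBE_gives_lie_bracket
    {L : Type*} [LieRing L] [LieAlgebra ℝ L] (R : L →ₗ[ℝ] L)
    (hR : ∀ A B : L, ⁅R A, R B⁆ - R (⁅R A, B⁆ + ⁅A, R B⁆) = -⁅A, B⁆) :
    (∀ A A' B : L, rBr R (A + A') B = rBr R A B + rBr R A' B) ∧
    (∀ (c : ℝ) (A B : L), rBr R (c • A) B = c • rBr R A B) ∧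
    (∀ A B B' : L, rBr R A (B + B') = rBr R A B + rBr R A B') ∧
    (∀ (c : ℝ) (A B : L), rBr R A (c • B) = c • rBr R A B) ∧
    (∀ A B : L, rBr R A B = - rBr R B A) ∧
    (∀ A B C : L, rBr R A (rBr R B C) + rBr R B (rBr R C A) + rBr R C (rBr R A B) = 0) := by
  have key : ∀ B C : L, R (⁅R B, C⁆ + ⁅B, R C⁆) = ⁅R B, R C⁆ + ⁅B, C⁆ := by
    intro B C
    have h := hR B C
    rw [sub_eq_iff_eq_add] at h
    rw [h]; abel
  refine ⟨?_, ?_, ?_, ?_, ?_, ?_⟩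
  · intro A A' B; simp [rBr, add_lie, lie_add, smul_add]; abel
  · intro c A B; simp [rBr, smul_lie, lie_smul, smul_add, smul_smul, mul_comm]
  · intro A B B'; simp [rBr, add_lie, lie_add, smul_add]; abel
  · intro c A B; simp [rBr, smul_lie, lie_smul, smul_add, smul_smul, mul_comm]
  · intro A B; simp [rBr]
    rw [← lie_skew (R A) B, ← lie_skew A (R B)]
    module
  · intro A B C
    simp only [rBr, map_smul, key]
    have j1 := lie_jacobi (R A) (R B) C
    have j2 := lie_jacobi (R B) (R C) A
    have j3 := lie_jacobi (R C) (R A) B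
    have j4 := lie_jacobi A B C
    simp only [lie_add, lie_smul]
    linear_combination (norm := module) ((4:ℝ)⁻¹) • j1 + ((4:ℝ)⁻¹) • j2 + ((4:ℝ)⁻¹) • j3 + ((4:ℝ)⁻¹) • j4
end
end

section
/- Let a, b: ℝ → ℝ and let K be the Hilbert-Schmidt operator with single-pair kernel K(x,y) = a(x)b(y) for x ≤ y and a(y)b(x) for x > y. If g₋ = I + A with A a lower-triangular Volterra Hilbert-Schmidt operator, then the 𝔩*-projection Π*_𝔩(g₋⁻¹∘K∘g₋) again has a single-pair kernel, namely (g₋⁻¹a)(x)(g₋*b)(y) for x ≤ y and (g₋⁻¹a)(y)(g₋*b)(x) for x > y. -/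
open MeasureTheory

noncomputable section

/-- The single-pair kernel built from `a` and `b`. -/
def spKer (a b : ℝ → ℝ) (x y : ℝ) : ℝ := if x ≤ y then a x * b y else a y * b x

/-- Kernel of the dual projection `Π_𝔩*`: `A(x,y) χ_{y>x} + A(y,x) χ_{y<x}`. -/
def dualProjL (A : ℝ → ℝ → ℝ) (x y : ℝ) : ℝ :=
  (if x < y then A x y else 0) + (if y < x then A y x else 0)

/-- `Π_𝔩*(g₋⁻¹ ∘ K ∘ g₋)` of a single-pair kernel is again a single-pair
kernel, built from `g₋⁻¹ a` and `g₋* b`, where `g₋ = I + A` and `g₋⁻¹ = I + C`. -/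
theorem single_pair_kernels_invariant
    (a b : ℝ → ℝ) (A C : ℝ → ℝ → ℝ)
    (hA : MemLp (fun p : ℝ × ℝ => A p.1 p.2) 2 (volume : Measure (ℝ × ℝ)))
    (hC : MemLp (fun p : ℝ × ℝ => C p.1 p.2) 2 (volume : Measure (ℝ × ℝ)))
    (hAsupp : ∀ x y : ℝ, x < y → A x y = 0)
    (hCsupp : ∀ x y : ℝ, x < y → C x y = 0)
    -- `(I + A)(I + C) = I` and `(I + C)(I + A) = I` at the level of kernels
    (hinv1 : ∀ x y : ℝ, A x y + C x y + ∫ z : ℝ, A x z * C z y = 0)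
    (hinv2 : ∀ x y : ℝ, A x y + C x y + ∫ z : ℝ, C x z * A z y = 0)
    -- the single-pair kernel is Hilbert-Schmidt
    (hK : MemLp (fun p : ℝ × ℝ => spKer a b p.1 p.2) 2 (volume : Measure (ℝ × ℝ))) :
    ∀ x y : ℝ, x ≠ y →
      dualProjL
        (fun u v =>
          spKer a b u v + (∫ z : ℝ, C u z * spKer a b z v) +
            (∫ z : ℝ, spKer a b u z * A z v) +
            ∫ z : ℝ, (∫ w : ℝ, C u w * spKer a b w z) * A z v)
        x y
      = spKer (fun u => a u + ∫ z : ℝ, C u z * a z)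
          (fun v => b v + ∫ z : ℝ, A z v * b z) x y := by

  have key : ∀ x y : ℝ, x < y →
      spKer a b x y + (∫ z : ℝ, C x z * spKer a b z y) +
        (∫ z : ℝ, spKer a b x z * A z y) +
        (∫ z : ℝ, (∫ w : ℝ, C x w * spKer a b w z) * A z y)
      = (a x + ∫ z : ℝ, C x z * a z) * (b y + ∫ z : ℝ, A z y * b z) := by
    intro x y hxy
    have h1 : spKer a b x y = a x * b y := by simp [spKer, hxy.le]
    have h2 : (∫ z : ℝ, C x z * spKer a b z y) = (∫ z : ℝ, C x z * a z) * b y := by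
      rw [← integral_mul_const]
      congr 1; funext z
      by_cases hz : z ≤ x
      · simp [spKer, hz.trans hxy.le, mul_assoc]
      · simp [hCsupp x z (lt_of_not_ge hz)]
    have h3 : (∫ z : ℝ, spKer a b x z * A z y) = a x * ∫ z : ℝ, A z y * b z := by
      rw [← integral_const_mul]
      congr 1; funext z
      by_cases hz : y ≤ z
      · have hxz : x ≤ z := hxy.le.trans hz
        simp only [spKer, if_pos hxz]; ring
      · simp [hAsupp z y (lt_of_not_ge hz)]
    have h4 : (∫ z : ℝ, (∫ w : ℝ, C x w * spKer a b w z) * A z y)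
        = (∫ z : ℝ, C x z * a z) * ∫ z : ℝ, A z y * b z := by
      rw [← integral_const_mul]
      congr 1; funext z
      by_cases hz : y ≤ z
      · have hinner : (∫ w : ℝ, C x w * spKer a b w z)
            = (∫ w : ℝ, C x w * a w) * b z := by
          rw [← integral_mul_const]
          congr 1; funext w
          by_cases hw : w ≤ x
          · simp [spKer, hw.trans (hxy.le.trans hz), mul_assoc]
          · simp [hCsupp x w (lt_of_not_ge hw)]
        rw [hinner]; ring
      · simp [hAsupp z y (lt_of_not_ge hz)]
    rw [h1, h2, h3, h4]; ring
  intro x y hxy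
  rcases lt_or_gt_of_ne hxy with h | h
  · simpa [dualProjL, spKer, h, h.le, not_lt.2 h.le] using key x y h
  · simpa [dualProjL, spKer, h, h.le, not_lt.2 h.le, not_le.2 h] using key y x h
end
end
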